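/- Let S ∈ ℝ^{m×n}, let x_0 ∈ ℝ^d, let C_S = Σ_{i=1}^d λ_i v_i v_iᵀ be an eigenvalue decomposition of C_S with orthonormal eigenvectors v_i and eigenvalues λ_i > 0, and set ξ_i = ⟨v_i, H^{1/2}(x_0 − x*)⟩. Then any sequence (x_t)_{t≥0} satisfying x_{t+1} − x_0 ∈ H_S⁻¹ · span{∇f(x_0), …, ∇f(x_t)} for all t ≥ 0 obeys, at each iteration t, δ_{x_t} ≥ (1/2) · min over real polynomials Q of degree at most t with Q(0)=1 of Σ_{i=1}^d Q(1/λ_i)² ξ_i². -/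

import Mathlib

open Matrix MeasureTheory ProbabilityTheory Real Polynomial
open scoped Classical

noncomputable section

/-- Spectral (operator) norm of a real matrix, via its action on Euclidean space. -/
def spectralNorm' {k l : ℕ} (M : Matrix (Fin k) (Fin l) ℝ) : ℝ :=
  ‖LinearMap.toContinuousLinearMap (Matrix.toEuclideanLin M)‖

/-- Positive semidefinite square root of a matrix (junk value `0` if `M` is not
positive semidefinite). -/
def msqrt {d : ℕ} (M : Matrix (Fin d) (Fin d) ℝ) : Matrix (Fin d) (Fin d) ℝ :=
  if h : M.PosSemidef then
    (h.1.eigenvectorUnitary : Matrix (Fin d) (Fin d) ℝ) *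
      diagonal (fun i => √(h.1.eigenvalues i)) *
      (star h.1.eigenvectorUnitary : Matrix (Fin d) (Fin d) ℝ)
  else 0

/-- The Hessian `H = Aᵀ A + ν² Λ`. -/
def Hmat {n d : ℕ} (A : Matrix (Fin n) (Fin d) ℝ) (ν : ℝ)
    (Λ : Matrix (Fin d) (Fin d) ℝ) : Matrix (Fin d) (Fin d) ℝ :=
  Aᵀ * A + ν ^ 2 • Λ

/-- The sketched Hessian `H_S = Aᵀ Sᵀ S A + ν² Λ`. -/
def HSmat {n d m : ℕ} (A : Matrix (Fin n) (Fin d) ℝ) (ν : ℝ)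
    (Λ : Matrix (Fin d) (Fin d) ℝ) (S : Matrix (Fin m) (Fin n) ℝ) :
    Matrix (Fin d) (Fin d) ℝ :=
  Aᵀ * Sᵀ * S * A + ν ^ 2 • Λ

/-- `C_S = H^{-1/2} H_S H^{-1/2}`. -/
def CSmat {n d m : ℕ} (A : Matrix (Fin n) (Fin d) ℝ) (ν : ℝ)
    (Λ : Matrix (Fin d) (Fin d) ℝ) (S : Matrix (Fin m) (Fin n) ℝ) :
    Matrix (Fin d) (Fin d) ℝ :=
  (msqrt (Hmat A ν Λ))⁻¹ * HSmat A ν Λ S * (msqrt (Hmat A ν Λ))⁻¹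

/-- The minimizer `x* = H⁻¹ b`. -/
def xstar {n d : ℕ} (A : Matrix (Fin n) (Fin d) ℝ) (ν : ℝ)
    (Λ : Matrix (Fin d) (Fin d) ℝ) (b : Fin d → ℝ) : Fin d → ℝ :=
  (Hmat A ν Λ)⁻¹.mulVec b

/-- The gradient `∇f(x) = H x - b`. -/
def gradf {n d : ℕ} (A : Matrix (Fin n) (Fin d) ℝ) (ν : ℝ)
    (Λ : Matrix (Fin d) (Fin d) ℝ) (b : Fin d → ℝ) (x : Fin d → ℝ) : Fin d → ℝ :=
  (Hmat A ν Λ).mulVec x - b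

/-- The exact error `δ_x = (1/2)(x - x*)ᵀ H (x - x*)`. -/
def deltaEx {n d : ℕ} (A : Matrix (Fin n) (Fin d) ℝ) (ν : ℝ)
    (Λ : Matrix (Fin d) (Fin d) ℝ) (b : Fin d → ℝ) (x : Fin d → ℝ) : ℝ :=
  (1 / 2) * ((x - xstar A ν Λ b) ⬝ᵥ (Hmat A ν Λ).mulVec (x - xstar A ν Λ b))

/-- The approximate Newton decrement `δ̃_x = (1/2) ∇f(x)ᵀ H_S⁻¹ ∇f(x)`. -/
def deltaApx {n d m : ℕ} (A : Matrix (Fin n) (Fin d) ℝ) (ν : ℝ)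
    (Λ : Matrix (Fin d) (Fin d) ℝ) (b : Fin d → ℝ)
    (S : Matrix (Fin m) (Fin n) ℝ) (x : Fin d → ℝ) : ℝ :=
  (1 / 2) * (gradf A ν Λ b x ⬝ᵥ (HSmat A ν Λ S)⁻¹.mulVec (gradf A ν Λ b x))


section AuxLemmas

lemma sum_mulVec' {d : ℕ} (M : Fin d → Matrix (Fin d) (Fin d) ℝ) (w : Fin d → ℝ) :
    (∑ i, M i) *ᵥ w = ∑ i, M i *ᵥ w := by
  ext j
  simp only [Matrix.mulVec, dotProduct, Finset.sum_apply, Matrix.sum_apply,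
    Finset.sum_mul]
  exact Finset.sum_comm

lemma dotProduct_sum' {d : ℕ} (a : Fin d → ℝ) (f : Fin d → Fin d → ℝ) :
    a ⬝ᵥ (∑ i, f i) = ∑ i, a ⬝ᵥ f i := by
  simp only [dotProduct, Finset.sum_apply, Finset.mul_sum]
  exact Finset.sum_comm

lemma vecMulVec_mulVec' {d : ℕ} (a b w : Fin d → ℝ) :
    Matrix.vecMulVec a b *ᵥ w = (b ⬝ᵥ w) • a := by
  ext i
  simp only [Matrix.mulVec, dotProduct, Matrix.vecMulVec_apply, Pi.smul_apply,
    smul_eq_mul]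
  rw [Finset.sum_mul]
  exact Finset.sum_congr rfl fun k _ => by ring

lemma vecMulVec_mul' {d : ℕ} (a b c e : Fin d → ℝ) :
    Matrix.vecMulVec a b * Matrix.vecMulVec c e = (b ⬝ᵥ c) • Matrix.vecMulVec a e := by
  ext i j
  simp only [Matrix.mul_apply, Matrix.vecMulVec_apply, Matrix.smul_apply, smul_eq_mul,
    dotProduct]
  rw [Finset.sum_mul]
  exact Finset.sum_congr rfl fun k _ => by ring

end AuxLemmas

/-- Lower bound for any preconditioned first-order method:
`δ_{x_t} ≥ (1/2)·min_{Q, deg Q ≤ t, Q(0)=1} Σ_i Q(1/λ_i)² ξ_i²`. -/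
theorem stmt4 {n d m : ℕ} (hd : 1 ≤ d) (hdn : d ≤ n)
    (A : Matrix (Fin n) (Fin d) ℝ) (b : Fin d → ℝ)
    (Λ : Matrix (Fin d) (Fin d) ℝ) (hΛdiag : Λ.IsDiag)
    (hΛ : (Λ - 1).PosSemidef) (ν : ℝ) (hν : 0 < ν)
    (S : Matrix (Fin m) (Fin n) ℝ)
    -- eigenvalue decomposition `C_S = Σ_i λ_i v_i v_iᵀ`
    (lam : Fin d → ℝ) (v : Fin d → Fin d → ℝ)
    (hortho : ∀ i j, v i ⬝ᵥ v j = if i = j then (1 : ℝ) else 0)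
    (hpos : ∀ i, 0 < lam i)
    (hdecomp : CSmat A ν Λ S = ∑ i, lam i • Matrix.vecMulVec (v i) (v i))
    (x : ℕ → Fin d → ℝ)
    (hx : ∀ t : ℕ, x (t + 1) - x 0 ∈
      Submodule.map (Matrix.mulVecLin (HSmat A ν Λ S)⁻¹)
        (Submodule.span ℝ {g | ∃ s ≤ t, g = gradf A ν Λ b (x s)})) :
    ∀ t : ℕ,
      sInf {y : ℝ | ∃ Q : Polynomial ℝ, Q.natDegree ≤ t ∧ Q.eval 0 = 1 ∧
          y = (1 / 2) * ∑ i, (Q.eval (lam i)⁻¹) ^ 2 *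
            (v i ⬝ᵥ (msqrt (Hmat A ν Λ)).mulVec (x 0 - xstar A ν Λ b)) ^ 2}
        ≤ deltaEx A ν Λ b (x t) := by
  -- Positive definiteness facts
  have hΛpd : Λ.PosDef := by
    have h1 : ((Λ - 1) + 1).PosDef := Matrix.PosDef.posSemidef_add hΛ Matrix.PosDef.one
    simpa using h1
  have hsmulpd : (ν ^ 2 • Λ).PosDef := by
    refine ⟨?_, fun y hy => ?_⟩
    · unfold Matrix.IsHermitian
      rw [Matrix.conjTranspose_smul, hΛpd.1.eq, star_trivial]
    · exact (hΛpd.smul (pow_pos hν 2)).2 hy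
  have hHpd : (Hmat A ν Λ).PosDef := by
    have hAA : (Aᵀ * A).PosSemidef := by
      have := Matrix.posSemidef_conjTranspose_mul_self A
      rwa [Matrix.conjTranspose_eq_transpose_of_trivial] at this
    exact Matrix.PosDef.posSemidef_add hAA hsmulpd
  have hHSpd : (HSmat A ν Λ S).PosDef := by
    have hAA : (Aᵀ * Sᵀ * S * A).PosSemidef := by
      have := Matrix.posSemidef_conjTranspose_mul_self (S * A)
      rwa [Matrix.conjTranspose_eq_transpose_of_trivial, Matrix.transpose_mul,
        ← Matrix.mul_assoc] at this
    exact Matrix.PosDef.posSemidef_add hAA hsmulpd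
  -- the square root R
  set R := msqrt (Hmat A ν Λ) with hRdef
  have hRsq : R * R = Hmat A ν Λ := by
    rw [hRdef, msqrt, dif_pos hHpd.posSemidef]
    have hU : (star hHpd.posSemidef.1.eigenvectorUnitary : Matrix (Fin d) (Fin d) ℝ) *
        (hHpd.posSemidef.1.eigenvectorUnitary : Matrix (Fin d) (Fin d) ℝ) = 1 :=
      Unitary.coe_star_mul_self _
    conv_rhs => rw [hHpd.posSemidef.1.spectral_theorem, Unitary.conjStarAlgAut_apply]
    calc _ = (hHpd.posSemidef.1.eigenvectorUnitary : Matrix (Fin d) (Fin d) ℝ) *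
          (diagonal (fun i => √(hHpd.posSemidef.1.eigenvalues i)) *
          ((star hHpd.posSemidef.1.eigenvectorUnitary : Matrix (Fin d) (Fin d) ℝ) *
          (hHpd.posSemidef.1.eigenvectorUnitary : Matrix (Fin d) (Fin d) ℝ)) *
          diagonal (fun i => √(hHpd.posSemidef.1.eigenvalues i))) *
          (star hHpd.posSemidef.1.eigenvectorUnitary : Matrix (Fin d) (Fin d) ℝ) := by
          simp only [Matrix.mul_assoc]
      _ = _ := by
          rw [hU, Matrix.mul_one, diagonal_mul_diagonal]
          congr 2
          ext i j
          rw [diagonal_apply, diagonal_apply]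
          split_ifs with hij
          · subst hij
            exact Real.mul_self_sqrt (hHpd.posSemidef.eigenvalues_nonneg i)
          · rfl
  have hRsymm : Rᵀ = R := by
    rw [hRdef, msqrt, dif_pos hHpd.posSemidef]
    simp only [Matrix.star_eq_conjTranspose, Matrix.conjTranspose_eq_transpose_of_trivial,
      Matrix.transpose_mul, Matrix.transpose_transpose, Matrix.diagonal_transpose,
      Matrix.mul_assoc]
  have hRdet : IsUnit R.det := by
    have h2 : R.det * R.det = (Hmat A ν Λ).det := by rw [← Matrix.det_mul, hRsq]
    have h3 := hHpd.det_pos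
    refine isUnit_iff_ne_zero.mpr fun h => ?_
    rw [h, mul_zero] at h2
    rw [← h2] at h3
    exact lt_irrefl _ h3
  have hRR' : R * R⁻¹ = 1 := Matrix.mul_nonsing_inv _ hRdet
  have hR'R : R⁻¹ * R = 1 := Matrix.nonsing_inv_mul _ hRdet
  have hHdet : IsUnit (Hmat A ν Λ).det := hHpd.det_pos.ne'.isUnit
  -- orthonormal family facts
  have hsumP : ∑ i, Matrix.vecMulVec (v i) (v i) = (1 : Matrix (Fin d) (Fin d) ℝ) := by
    have hVVt : (Matrix.of v) * (Matrix.of v)ᵀ = 1 := by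
      ext i j
      simpa [Matrix.mul_apply, Matrix.one_apply, dotProduct] using hortho i j
    have hVtV : (Matrix.of v)ᵀ * (Matrix.of v) = 1 := mul_eq_one_comm.mp hVVt
    rw [← hVtV]
    ext a c
    simp [Matrix.sum_apply, Matrix.vecMulVec_apply, Matrix.mul_apply, mul_comm]
  set Nm := ∑ i, (lam i)⁻¹ • Matrix.vecMulVec (v i) (v i) with hNm
  have hmulPP : ∀ (c e : Fin d → ℝ),
      (∑ i, c i • Matrix.vecMulVec (v i) (v i)) * (∑ j, e j • Matrix.vecMulVec (v j) (v j))
        = ∑ i, (c i * e i) • Matrix.vecMulVec (v i) (v i) := by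
    intro c e
    rw [Finset.sum_mul]
    refine Finset.sum_congr rfl fun i _ => ?_
    rw [Finset.mul_sum, Finset.sum_eq_single i]
    · rw [Matrix.smul_mul, Matrix.mul_smul, vecMulVec_mul', hortho i i, if_pos rfl,
        one_smul, smul_smul]
    · intro j _ hj
      rw [Matrix.smul_mul, Matrix.mul_smul, vecMulVec_mul', hortho i j,
        if_neg (fun h => hj h.symm), zero_smul, smul_zero, smul_zero]
    · intro h
      exact absurd (Finset.mem_univ i) h
  have hCN : CSmat A ν Λ S * Nm = 1 := by
    rw [hdecomp, hNm, hmulPP]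
    calc ∑ i, (lam i * (lam i)⁻¹) • Matrix.vecMulVec (v i) (v i)
        = ∑ i, Matrix.vecMulVec (v i) (v i) :=
          Finset.sum_congr rfl fun i _ => by rw [mul_inv_cancel₀ (hpos i).ne', one_smul]
      _ = 1 := hsumP
  have hCS_eq : HSmat A ν Λ S = R * CSmat A ν Λ S * R := by
    simp only [CSmat]
    rw [← hRdef]
    calc HSmat A ν Λ S = (R * R⁻¹) * HSmat A ν Λ S * (R⁻¹ * R) := by
          rw [hRR', hR'R, Matrix.one_mul, Matrix.mul_one]
      _ = R * (R⁻¹ * HSmat A ν Λ S * R⁻¹) * R := by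
          simp only [Matrix.mul_assoc]
  have hHSinv : (HSmat A ν Λ S)⁻¹ = R⁻¹ * Nm * R⁻¹ := by
    apply Matrix.inv_eq_right_inv
    rw [hCS_eq]
    calc (R * CSmat A ν Λ S * R) * (R⁻¹ * Nm * R⁻¹)
        = R * (CSmat A ν Λ S * ((R * R⁻¹) * (Nm * R⁻¹))) := by simp only [Matrix.mul_assoc]
      _ = R * ((CSmat A ν Λ S * Nm) * R⁻¹) := by rw [hRR', Matrix.one_mul, Matrix.mul_assoc]
      _ = 1 := by rw [hCN, Matrix.one_mul, hRR']
  have hKey : R * (HSmat A ν Λ S)⁻¹ * R = Nm := by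
    rw [hHSinv]
    calc R * (R⁻¹ * Nm * R⁻¹) * R = (R * R⁻¹) * Nm * (R⁻¹ * R) := by
          simp only [Matrix.mul_assoc]
      _ = Nm := by rw [hRR', hR'R, Matrix.one_mul, Matrix.mul_one]
  -- action of Nm on the eigenbasis
  have hNact : ∀ (i : Fin d) (w : Fin d → ℝ),
      v i ⬝ᵥ (Nm *ᵥ w) = (lam i)⁻¹ * (v i ⬝ᵥ w) := by
    intro i w
    rw [hNm, sum_mulVec', dotProduct_sum', Finset.sum_eq_single i]
    · rw [Matrix.smul_mulVec, vecMulVec_mulVec', dotProduct_smul,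
        dotProduct_smul, hortho i i, if_pos rfl]
      simp only [smul_eq_mul]
      ring
    · intro j _ hj
      rw [Matrix.smul_mulVec, vecMulVec_mulVec', dotProduct_smul,
        dotProduct_smul, hortho i j, if_neg (fun h => hj h.symm)]
      simp
    · intro h
      exact absurd (Finset.mem_univ i) h
  -- Parseval
  have hpars : ∀ w : Fin d → ℝ, w ⬝ᵥ w = ∑ i, (v i ⬝ᵥ w) ^ 2 := by
    intro w
    calc w ⬝ᵥ w = w ⬝ᵥ ((1 : Matrix (Fin d) (Fin d) ℝ) *ᵥ w) := by rw [Matrix.one_mulVec]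
      _ = w ⬝ᵥ ((∑ i, Matrix.vecMulVec (v i) (v i)) *ᵥ w) := by rw [hsumP]
      _ = ∑ i, w ⬝ᵥ (Matrix.vecMulVec (v i) (v i) *ᵥ w) := by
            rw [sum_mulVec', dotProduct_sum']
      _ = ∑ i, (v i ⬝ᵥ w) ^ 2 := Finset.sum_congr rfl fun i _ => by
            rw [vecMulVec_mulVec', dotProduct_smul, smul_eq_mul,
              dotProduct_comm w (v i)]
            ring
  -- gradient identity
  have hxstar : (Hmat A ν Λ) *ᵥ (xstar A ν Λ b) = b := by
    rw [xstar, Matrix.mulVec_mulVec, Matrix.mul_nonsing_inv _ hHdet, Matrix.one_mulVec]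
  have hgrad : ∀ s : ℕ, gradf A ν Λ b (x s) = (Hmat A ν Λ) *ᵥ (x s - xstar A ν Λ b) := by
    intro s
    rw [gradf, Matrix.mulVec_sub, hxstar]
  set u : ℕ → Fin d → ℝ := fun s => R *ᵥ (x s - xstar A ν Λ b) with hu_def
  have hgradu : ∀ s : ℕ, gradf A ν Λ b (x s) = R *ᵥ u s := by
    intro s
    rw [hgrad s, ← hRsq, ← Matrix.mulVec_mulVec]
  -- main induction
  have main : ∀ t : ℕ, ∃ Q : Polynomial ℝ, Q.natDegree ≤ t ∧ Q.eval 0 = 1 ∧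
      ∀ i, v i ⬝ᵥ u t = Q.eval (lam i)⁻¹ * (v i ⬝ᵥ u 0) := by
    intro t
    induction t using Nat.strong_induction_on with
    | _ t ih =>
      rcases t with _ | t
      · exact ⟨1, by simp, by simp, fun i => by simp⟩
      · have key : ∀ g ∈ Submodule.span ℝ {g | ∃ s ≤ t, g = gradf A ν Λ b (x s)},
            ∃ Q : Polynomial ℝ, Q.natDegree ≤ t + 1 ∧ Q.eval 0 = 0 ∧
              ∀ i, v i ⬝ᵥ (R *ᵥ ((HSmat A ν Λ S)⁻¹ *ᵥ g))
                = Q.eval (lam i)⁻¹ * (v i ⬝ᵥ u 0) := by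
          intro g hg
          induction hg using Submodule.span_induction with
          | mem y hy =>
            obtain ⟨s, hs, rfl⟩ := hy
            obtain ⟨Qs, hdeg, he0, hQs⟩ := ih s (Nat.lt_succ_of_le hs)
            refine ⟨X * Qs, ?_, by simp, fun i => ?_⟩
            · calc (X * Qs).natDegree ≤ X.natDegree + Qs.natDegree := natDegree_mul_le
                _ ≤ 1 + t := add_le_add natDegree_X_le (hdeg.trans hs)
                _ = t + 1 := by omega
            · rw [hgradu s, Matrix.mulVec_mulVec, Matrix.mulVec_mulVec,
                hKey, hNact i (u s), hQs i, eval_mul, eval_X]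
              ring
          | zero =>
            exact ⟨0, by simp, by simp, fun i => by simp⟩
          | add y z hy hz ihy ihz =>
            obtain ⟨Q1, hd1, he1, h1⟩ := ihy
            obtain ⟨Q2, hd2, he2, h2⟩ := ihz
            refine ⟨Q1 + Q2, (natDegree_add_le _ _).trans (max_le hd1 hd2),
              by simp [he1, he2], fun i => ?_⟩
            rw [Matrix.mulVec_add, Matrix.mulVec_add, dotProduct_add, h1 i, h2 i,
              eval_add]
            ring
          | smul c y hy ihy =>
            obtain ⟨Q1, hd1, he1, h1⟩ := ihy
            refine ⟨c • Q1, (natDegree_smul_le _ _).trans hd1, by simp [he1], fun i => ?_⟩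
            rw [Matrix.mulVec_smul, Matrix.mulVec_smul, dotProduct_smul, h1 i]
            simp only [smul_eq_mul, eval_smul]
            ring
        obtain ⟨g, hg, hgeq⟩ := hx t
        obtain ⟨Q, hdQ, heQ, hQ⟩ := key g hg
        have hu : u (t + 1) = u 0 + R *ᵥ ((HSmat A ν Λ S)⁻¹ *ᵥ g) := by
          rw [Matrix.mulVecLin_apply] at hgeq
          rw [hu_def]
          simp only
          rw [hgeq, ← Matrix.mulVec_add]
          congr 1
          abel
        refine ⟨1 + Q, (natDegree_add_le _ _).trans (max_le (by simp) hdQ),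
          by simp [heQ], fun i => ?_⟩
        rw [hu, dotProduct_add, hQ i, eval_add, eval_one]
        ring
  -- conclusion
  intro t
  obtain ⟨Q, hdQ, heQ, hQ⟩ := main t
  have hu0 : u 0 = R *ᵥ (x 0 - xstar A ν Λ b) := rfl
  have hset : deltaEx A ν Λ b (x t)
      = (1 / 2) * ∑ i, (Q.eval (lam i)⁻¹) ^ 2 *
          (v i ⬝ᵥ R *ᵥ (x 0 - xstar A ν Λ b)) ^ 2 := by
    rw [deltaEx]
    have h1 : (x t - xstar A ν Λ b) ⬝ᵥ (Hmat A ν Λ) *ᵥ (x t - xstar A ν Λ b)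
        = u t ⬝ᵥ u t := by
      rw [← hRsq, ← Matrix.mulVec_mulVec, dotProduct_mulVec,
        ← Matrix.mulVec_transpose, hRsymm]
    rw [h1, hpars (u t)]
    congr 1
    refine Finset.sum_congr rfl fun i _ => ?_
    rw [hQ i, mul_pow, ← hu0]
  rw [hset]
  apply csInf_le
  · refine ⟨0, fun y hy => ?_⟩
    obtain ⟨Q', _, _, rfl⟩ := hy
    positivity
  · exact ⟨Q, hdQ, heQ, rfl⟩
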